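/- Let μ be a Borel probability measure on [0,∞) with μ ≠ δ₀, let a ∈ ℝ, b ≥ 0, and let ρ be a finite positive Borel measure on [0,∞). Suppose that for all z ∈ ℂ∖[0,∞) one has z/η_μ(z) = exp(a − bz + ∫_{[0,∞)} (1+zs)/(z−s) dρ(s)). Then b = 0. -/

import Mathlib

open MeasureTheory Filter

/-- Ω = ℂ ∖ [0,∞) -/
def OmegaR : Set ℂ := {z : ℂ | ¬ (z.im = 0 ∧ 0 ≤ z.re)}

/-- ψ-transform of a measure on [0,∞) (viewed as a measure on ℝ). -/
noncomputable def psiR (μ : Measure ℝ) (z : ℂ) : ℂ :=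
  ∫ s : ℝ, z * (s : ℂ) / (1 - z * (s : ℂ)) ∂μ

/-- η-transform of a measure on [0,∞). -/
noncomputable def etaR (μ : Measure ℝ) (z : ℂ) : ℂ :=
  psiR μ z / (1 + psiR μ z)


lemma aux_exists_eps (μ : Measure ℝ) [IsProbabilityMeasure μ]
    (hsupp : μ (Set.Iio 0) = 0) (hμ : μ ≠ Measure.dirac 0) :
    ∃ ε : ℝ, 0 < ε ∧ μ (Set.Ici ε) ≠ 0 := by
  by_contra hc
  push_neg at hc
  have hIoi : μ (Set.Ioi 0) = 0 := by
    have hcov : Set.Ioi (0:ℝ) ⊆ ⋃ n : ℕ, Set.Ici ((1:ℝ)/(n+1)) := by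
      intro s hs
      obtain ⟨n, hn⟩ := exists_nat_one_div_lt (Set.mem_Ioi.mp hs)
      exact Set.mem_iUnion.mpr ⟨n, le_of_lt hn⟩
    refine measure_mono_null hcov (measure_iUnion_null fun n => hc _ (by positivity))
  apply hμ
  have h0 : μ ({0}ᶜ : Set ℝ) = 0 := by
    have : ({0}ᶜ : Set ℝ) ⊆ Set.Iio 0 ∪ Set.Ioi 0 := by
      intro s hs
      rcases lt_trichotomy s 0 with h | h | h
      · exact Or.inl h
      · exact absurd h hs
      · exact Or.inr h
    exact measure_mono_null this (by
      refine le_antisymm ?_ zero_le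
      calc μ (Set.Iio 0 ∪ Set.Ioi 0) ≤ μ (Set.Iio 0) + μ (Set.Ioi 0) := measure_union_le _ _
      _ = 0 := by rw [hsupp, hIoi]; simp)
  ext s hs
  rw [Measure.dirac_apply' _ hs]
  have h1 : μ s = μ (s ∩ {0}) := by
    refine le_antisymm ?_ (measure_mono Set.inter_subset_left)
    calc μ s ≤ μ (s ∩ {0}) + μ (s ∩ {0}ᶜ) := by
          rw [← measure_inter_add_diff s (measurableSet_singleton 0)]; rfl
    _ ≤ μ (s ∩ {0}) + 0 := by gcongr; exact le_of_eq (measure_mono_null Set.inter_subset_right h0)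
    _ = μ (s ∩ {0}) := by simp
  by_cases h0s : (0:ℝ) ∈ s
  · have : s ∩ {0} = {0} := by ext y; simp (config := {contextual := true}) [h0s]
    rw [h1, this]
    have : μ {0} = 1 := by
      have := measure_add_measure_compl (μ := μ) (measurableSet_singleton (0:ℝ))
      rw [h0] at this; simpa using this
    simp [this, Set.indicator_of_mem h0s]
  · have : s ∩ {0} = ∅ := by ext y; simp only [Set.mem_inter_iff, Set.mem_singleton_iff, Set.mem_empty_iff_false, iff_false]; rintro ⟨hy, rfl⟩; exact h0s hy
    rw [h1, this]
    simp [Set.indicator_of_notMem h0s]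

-- key estimate lemma
lemma key_est (μ : Measure ℝ) [IsProbabilityMeasure μ]
    (hsupp : μ (Set.Iio 0) = 0)
    (ρ : Measure ℝ) [IsFiniteMeasure ρ] (hρ : ρ (Set.Iio 0) = 0)
    (a b : ℝ)
    (h : ∀ z ∈ OmegaR, z / etaR μ z =
      Complex.exp ((a : ℂ) - (b : ℂ) * z + ∫ s : ℝ, (1 + z * (s : ℂ)) / (z - (s : ℂ)) ∂ρ))
    (ε x : ℝ) (hε : 0 < ε) (hμε : μ (Set.Ici ε) ≠ 0)
    (hx1 : 1 ≤ x) (hx2 : 1/ε ≤ x) :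
    Real.exp (a + b*x - (ρ Set.univ).toReal)
      ≤ 2 * x / (μ (Set.Ici ε)).toReal := by
  have hx0 : (0:ℝ) < x := lt_of_lt_of_le one_pos hx1
  set δ : ℝ := (μ (Set.Ici ε)).toReal with hδdef
  have hδ : 0 < δ := ENNReal.toReal_pos hμε (measure_ne_top μ _)
  have haeμ : ∀ᵐ s ∂μ, 0 ≤ s := by
    rw [ae_iff]
    have : {s : ℝ | ¬ 0 ≤ s} = Set.Iio 0 := by ext s; simp [not_le]
    rw [this]; exact hsupp
  have haeρ : ∀ᵐ s ∂ρ, 0 ≤ s := by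
    rw [ae_iff]
    have : {s : ℝ | ¬ 0 ≤ s} = Set.Iio 0 := by ext s; simp [not_le]
    rw [this]; exact hρ
  set P : ℝ := ∫ s, x*s/(1+x*s) ∂μ with hPdef
  -- psi value
  have hpsi : psiR μ (-(x:ℂ)) = ((-P : ℝ) : ℂ) := by
    unfold psiR
    have hcong : ∀ᵐ (s : ℝ) ∂μ, (-(x:ℂ)) * (s:ℂ) / (1 - (-(x:ℂ)) * (s:ℂ))
        = ((-(x*s/(1+x*s)) : ℝ) : ℂ) := by
      filter_upwards [haeμ] with s hs
      have h1 : (1+x*s:ℝ) ≠ 0 := by positivity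
      have h1' : ((1+x*s:ℝ):ℂ) ≠ 0 := by exact_mod_cast h1
      rw [show (1:ℂ) - (-(x:ℂ)) * (s:ℂ) = ((1+x*s:ℝ):ℂ) by push_cast; ring,
        show (-(x:ℂ)) * (s:ℂ) = ((-(x*s):ℝ):ℂ) by push_cast; ring,
        ← Complex.ofReal_div, neg_div]
    rw [integral_congr_ae hcong,
      show (-P : ℝ) = ∫ a, -(x*a/(1+x*a)) ∂μ by rw [integral_neg],
      ]
    exact integral_ofReal (𝕜 := ℂ)
  -- integrability of the P integrand
  have hmeasP : Measurable fun s : ℝ => x*s/(1+x*s) :=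
    (measurable_const.mul measurable_id).div (measurable_const.add (measurable_const.mul measurable_id))
  have hintP : Integrable (fun s : ℝ => x*s/(1+x*s)) μ := by
    refine Integrable.mono' (integrable_const 1) hmeasP.aestronglyMeasurable ?_
    filter_upwards [haeμ] with s hs
    have h1 : (0:ℝ) < 1+x*s := by positivity
    rw [Real.norm_eq_abs, abs_of_nonneg (by positivity)]
    rw [div_le_one h1]; linarith [mul_nonneg hx0.le hs]
  -- bounds on P
  have hP1 : P ≤ 1 := by
    have : P ≤ ∫ _s, (1:ℝ) ∂μ := by
      refine integral_mono_ae hintP (integrable_const 1) ?_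
      filter_upwards [haeμ] with s hs
      have h1 : (0:ℝ) < 1+x*s := by positivity
      rw [div_le_one h1]; linarith [mul_nonneg hx0.le hs]
    simpa using this
  have hP2 : δ/2 ≤ P := by
    have hind : ∫ s, (Set.Ici ε).indicator (fun _ => (1/2:ℝ)) s ∂μ = δ/2 := by
      rw [integral_indicator_const _ measurableSet_Ici]
      simp [hδdef, smul_eq_mul]; rfl
    rw [← hind]
    refine integral_mono_ae ?_ hintP ?_
    · exact (integrable_const _).indicator measurableSet_Ici
    · filter_upwards [haeμ] with s hs
      by_cases hsε : s ∈ Set.Ici ε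
      · rw [Set.indicator_of_mem hsε]
        have hxs : (1:ℝ) ≤ x*s := by
          calc (1:ℝ) = (1/ε) * ε := by field_simp
          _ ≤ x * s := by
            apply mul_le_mul hx2 hsε hε.le (le_trans (by positivity) hx2)
        have h1 : (0:ℝ) < 1+x*s := by linarith
        rw [le_div_iff₀ h1]; linarith
      · rw [Set.indicator_of_notMem hsε]
        positivity
  have hP0 : 0 < P := lt_of_lt_of_le (by linarith) hP2
  -- norm of LHS
  have hLHS : ‖(-(x:ℂ)) / etaR μ (-(x:ℂ))‖ ≤ 2 * x / δ := by
    have heta : etaR μ (-(x:ℂ)) = ((-P:ℝ):ℂ) / ((1-P:ℝ):ℂ) := by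
      rw [etaR, hpsi]
      congr 1
      push_cast; ring
    rw [heta, div_div_eq_mul_div, norm_div, norm_mul]
    have e1 : ‖(-(x:ℂ))‖ = x := by
      rw [norm_neg, Complex.norm_real, Real.norm_eq_abs, abs_of_pos hx0]
    have e2 : ‖((1-P:ℝ):ℂ)‖ = 1 - P := by
      rw [Complex.norm_real, Real.norm_eq_abs, abs_of_nonneg (by linarith)]
    have e3 : ‖((-P:ℝ):ℂ)‖ = P := by
      rw [Complex.norm_real, Real.norm_eq_abs, abs_of_neg (by linarith), neg_neg]
    rw [e1, e2, e3]
    calc x * (1-P) / P ≤ x / (δ/2) := by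
          apply div_le_div₀ (by positivity) (by nlinarith) (by linarith) hP2
    _ = 2 * x / δ := by field_simp
  -- rho integral
  set Rx : ℝ := ∫ s, (x*s - 1)/(x+s) ∂ρ with hRxdef
  have hIval : (∫ s : ℝ, (1 + (-(x:ℂ)) * (s:ℂ)) / ((-(x:ℂ)) - (s:ℂ)) ∂ρ) = ((Rx:ℝ):ℂ) := by
    have hcong : ∀ᵐ (s : ℝ) ∂ρ, (1 + (-(x:ℂ)) * (s:ℂ)) / ((-(x:ℂ)) - (s:ℂ))
        = (((x*s-1)/(x+s) : ℝ) : ℂ) := by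
      filter_upwards [haeρ] with s hs
      rw [show (1:ℂ) + (-(x:ℂ)) * (s:ℂ) = ((-(x*s-1):ℝ):ℂ) by push_cast; ring,
        show (-(x:ℂ)) - (s:ℂ) = ((-(x+s):ℝ):ℂ) by push_cast; ring,
        ← Complex.ofReal_div, neg_div_neg_eq]
    rw [integral_congr_ae hcong]
    exact integral_ofReal (𝕜 := ℂ)
  have hmeasR : Measurable fun s : ℝ => (x*s-1)/(x+s) :=
    ((measurable_const.mul measurable_id).sub measurable_const).div
      (measurable_const.add measurable_id)
  have hintR : Integrable (fun s : ℝ => (x*s-1)/(x+s)) ρ := by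
    refine Integrable.mono' (integrable_const (x+1)) hmeasR.aestronglyMeasurable ?_
    filter_upwards [haeρ] with s hs
    have h1 : (0:ℝ) < x+s := by linarith
    rw [Real.norm_eq_abs, abs_div, abs_of_pos h1, div_le_iff₀ h1]
    rw [abs_le]
    constructor <;> nlinarith [mul_nonneg hx0.le hs]
  have hRx : -(ρ Set.univ).toReal ≤ Rx := by
    have : ∫ _s, (-1:ℝ) ∂ρ ≤ Rx := by
      refine integral_mono_ae (integrable_const _) hintR ?_
      filter_upwards [haeρ] with s hs
      have h1 : (0:ℝ) < x+s := by linarith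
      rw [le_div_iff₀ h1]; nlinarith [mul_nonneg hx0.le hs]
    simpa [smul_eq_mul, mul_comm, Measure.real] using this
  -- put together
  have hmem : (-(x:ℂ)) ∈ OmegaR := by
    simp only [OmegaR, Set.mem_setOf_eq, not_and]
    intro _
    simp only [Complex.neg_re, Complex.ofReal_re]
    intro hle
    linarith
  have heq := h _ hmem
  have hRHS : ‖Complex.exp ((a : ℂ) - (b : ℂ) * (-(x:ℂ))
      + ∫ s : ℝ, (1 + (-(x:ℂ)) * (s : ℂ)) / ((-(x:ℂ)) - (s : ℂ)) ∂ρ)‖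
      = Real.exp (a + b*x + Rx) := by
    rw [hIval, show (a : ℂ) - (b : ℂ) * (-(x:ℂ)) + ((Rx:ℝ):ℂ) = ((a + b*x + Rx : ℝ):ℂ) by
      push_cast; ring]
    rw [Complex.norm_exp, Complex.ofReal_re]
  calc Real.exp (a + b*x - (ρ Set.univ).toReal) ≤ Real.exp (a + b*x + Rx) := by
        apply Real.exp_le_exp.mpr; linarith
  _ = ‖(-(x:ℂ)) / etaR μ (-(x:ℂ))‖ := by rw [heq, hRHS]
  _ ≤ 2 * x / δ := hLHS

theorem stmt7 (μ : Measure ℝ) [IsProbabilityMeasure μ]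
    (hsupp : μ (Set.Iio 0) = 0) (hμ : μ ≠ Measure.dirac 0)
    (ρ : Measure ℝ) [IsFiniteMeasure ρ] (hρ : ρ (Set.Iio 0) = 0)
    (a b : ℝ) (hb : 0 ≤ b)
    (h : ∀ z ∈ OmegaR, z / etaR μ z =
      Complex.exp ((a : ℂ) - (b : ℂ) * z + ∫ s : ℝ, (1 + z * (s : ℂ)) / (z - (s : ℂ)) ∂ρ)) :
    b = 0 := by
  by_contra hbne
  have hb' : 0 < b := lt_of_le_of_ne hb (Ne.symm hbne)
  obtain ⟨ε, hε, hμε⟩ := aux_exists_eps μ hsupp hμ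
  set δ : ℝ := (μ (Set.Ici ε)).toReal with hδdef
  have hδ : 0 < δ := ENNReal.toReal_pos hμε (measure_ne_top μ _)
  set R : ℝ := (ρ Set.univ).toReal with hRdef
  set K : ℝ := (2/δ) * Real.exp (R - a) with hKdef
  have hK : 0 < K := by positivity
  have key : ∀ x : ℝ, 1 ≤ x → 1/ε ≤ x → x ≤ 4*K/b^2 := by
    intro x hx1 hx2
    have hx0 : (0:ℝ) < x := lt_of_lt_of_le one_pos hx1
    have hest := key_est μ hsupp ρ hρ a b h ε x hε hμε hx1 hx2
    have h1 : Real.exp (b*x) ≤ K * x := by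
      have e : Real.exp (a + b*x - R) = Real.exp (b*x) * Real.exp (a - R) := by
        rw [← Real.exp_add]; ring_nf
      have e2 : Real.exp (a - R) * Real.exp (R - a) = 1 := by
        rw [← Real.exp_add]; ring_nf; exact Real.exp_zero
      have hexp : 0 < Real.exp (R - a) := Real.exp_pos _
      calc Real.exp (b*x) = Real.exp (a + b*x - R) * Real.exp (R - a) := by
            rw [e, mul_assoc, e2, mul_one]
      _ ≤ (2*x/δ) * Real.exp (R - a) := by
            apply mul_le_mul_of_nonneg_right hest hexp.le
      _ = K * x := by rw [hKdef]; field_simp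
    have h2 : b^2 * x^2 / 4 ≤ Real.exp (b*x) := by
      have ha1 : b*x/2 + 1 ≤ Real.exp (b*x/2) := by
        have := Real.add_one_le_exp (b*x/2); linarith
      have e2 : Real.exp (b*x) = Real.exp (b*x/2) * Real.exp (b*x/2) := by
        rw [← Real.exp_add]; ring_nf
      nlinarith [mul_pos hb' hx0, Real.exp_pos (b*x/2)]
    rw [le_div_iff₀ (by positivity : (0:ℝ) < b^2)]
    nlinarith
  have hcon := key (max (max 1 (1/ε)) (4*K/b^2) + 1)
    (by nlinarith [le_max_left (max 1 (1/ε)) (4*K/b^2), le_max_left 1 (1/ε)])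
    (by nlinarith [le_max_left (max 1 (1/ε)) (4*K/b^2), le_max_right 1 (1/ε)])
  nlinarith [le_max_right (max 1 (1/ε)) (4*K/b^2)]
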